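/- Let d ≥ 1 be an integer and P ⊆ ℤ. Then P is a Birkhoff recurrence set of order d if and only if for every t.d.s. (X,T) there exist x ∈ X and, for each i ∈ ℕ, integers n_i^1, …, n_i^d with FS({n_i^j}_{j=1}^d) ⊆ P such that for every ε = (ε_1,…,ε_d) ∈ {0,1}^d one has T^{ε_1 n_i^1 + ⋯ + ε_d n_i^d} x → x as i → ∞. -/

import Mathlib

open scoped Classical
open MeasureTheory Filter Topology

noncomputable section

/-- Integer iterate of a bijection `T` of a set: `zIter T n = T^n`. -/
def zIter {X : Type*} (T : Equiv.Perm X) (n : ℤ) : X → X := ⇑(T ^ n)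

/-- Integer iterate of a homeomorphism. -/
def hIter {X : Type*} [TopologicalSpace X] (T : X ≃ₜ X) (n : ℤ) : X → X :=
  zIter T.toEquiv n

/-- The integer nearest to `a`, with ties broken towards the smaller integer.
This is the `⌈·⌉` of the paper. -/
def nearInt (a : ℝ) : ℤ := if a - (⌊a⌋ : ℝ) ≤ 1/2 then ⌊a⌋ else ⌈a⌉

/-- The distance from `a` to the nearest integer, i.e. `‖a‖` in the paper. -/
def distInt (a : ℝ) : ℝ := |a - (nearInt a : ℝ)|

/-- Generalized polynomials of degree at most `d` (for `d ≥ 1`):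
`GP 1` is the smallest collection of functions `ℤ → ℝ` containing `n ↦ a n`
and closed under taking the nearest integer, scalar multiplication and finite sums;
`GP d` moreover contains every `GP e` for `e < d` and all functions
`n ↦ a₀ n^{p₀} ⌈f₁(n)⌉ ⋯ ⌈f k (n)⌉` with `f l ∈ GP (p l)` and `p₀ + ∑ p l = d`. -/
inductive GP : ℕ → (ℤ → ℝ) → Prop
  | lin (a : ℝ) : GP 1 (fun n => a * n)
  | mono {d : ℕ} (hd : 1 ≤ d) (a₀ : ℝ) (p₀ : ℕ) {k : ℕ} (p : Fin k → ℕ)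
      (f : Fin k → ℤ → ℝ) (hf : ∀ l, GP (p l) (f l)) (hsum : p₀ + ∑ l, p l = d) :
      GP d (fun n => a₀ * (n : ℝ) ^ p₀ * ∏ l, (nearInt (f l n) : ℝ))
  | incl {d e : ℕ} (hed : e < d) {f : ℤ → ℝ} (hf : GP e f) : GP d f
  | ceil {d : ℕ} {f : ℤ → ℝ} (hf : GP d f) : GP d (fun n => (nearInt (f n) : ℝ))
  | smul {d : ℕ} (c : ℝ) {f : ℤ → ℝ} (hf : GP d f) : GP d (fun n => c * f n)
  | add {d : ℕ} {f g : ℤ → ℝ} (hf : GP d f) (hg : GP d g) : GP d (fun n => f n + g n)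

/-- The bracket expression `L(a₁, …, a_ℓ) = a₁⌈L(a₂, …, a_ℓ)⌉`, `L(a) = a`. -/
def Lfun : List ℝ → ℝ
  | [] => 0
  | [a] => a
  | a :: b :: rest => a * (nearInt (Lfun (b :: rest)) : ℝ)

/-- Special generalized polynomials of degree at most `d`:
the functions `n ↦ L(n^{j₁} a₁, …, n^{j_ℓ} a_ℓ)` with `1 ≤ ℓ`, `j t ≥ 1`, `∑ j t ≤ d`. -/
def SGP (d : ℕ) (g : ℤ → ℝ) : Prop :=
  ∃ ℓ : ℕ, 1 ≤ ℓ ∧ ∃ (a : Fin ℓ → ℝ) (j : Fin ℓ → ℕ),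
    (∀ t, 1 ≤ j t) ∧ (∑ t, j t) ≤ d ∧
    g = fun n : ℤ => Lfun (List.ofFn fun t => (n : ℝ) ^ (j t) * a t)

/-- `FS({n i}) = {n_{i₁} + ⋯ + n_{i_k} : i₁ < ⋯ < i_k}`, the set of finite sums. -/
def FS {d : ℕ} (n : Fin d → ℤ) : Set ℤ :=
  { m | ∃ I : Finset (Fin d), I.Nonempty ∧ m = ∑ i ∈ I, n i }

/-- `SG d P`: sums `p_{i₁} + ⋯ + p_{i_k}` over strictly increasing finite index
sequences whose consecutive gaps are at most `d` (infinite sequence `P`). -/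
def SG (d : ℕ) (P : ℕ → ℤ) : Set ℤ :=
  { n | ∃ k : ℕ, ∃ i : Fin (k + 1) → ℕ, StrictMono i ∧
      (∀ t : Fin k, i t.succ - i t.castSucc ≤ d) ∧ n = ∑ t, P (i t) }

/-- `SGfin d P` : the same for a finite sequence `P` of length `m`. -/
def SGfin (d : ℕ) {m : ℕ} (P : Fin m → ℤ) : Set ℤ :=
  { n | ∃ k : ℕ, ∃ i : Fin (k + 1) → Fin m, StrictMono i ∧
      (∀ t : Fin k, (i t.succ : ℕ) - (i t.castSucc : ℕ) ≤ d) ∧ n = ∑ t, P (i t) }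

/-- A set of integers is syndetic if it has bounded gaps. -/
def Syndetic (A : Set ℤ) : Prop :=
  ∃ N : ℕ, ∀ i : ℤ, ∃ j, i ≤ j ∧ j ≤ i + N ∧ j ∈ A

/-- `F` has positive upper Banach density. -/
def PosUpperBanachDensity (F : Set ℤ) : Prop :=
  ∃ δ : ℝ, 0 < δ ∧ ∀ N : ℕ, ∃ (a : ℤ) (L : ℕ), N ≤ L ∧ 1 ≤ L ∧
    δ * L ≤ ((Finset.Icc a (a + L - 1)).filter (fun x => x ∈ F)).card

/-- A set `A ⊆ ℤ` contains finite IP-sets of arbitrarily long lengths. -/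
def ContainsArbLongFIP (A : Set ℤ) : Prop :=
  ∀ k : ℕ, 1 ≤ k → ∃ p : Fin k → ℤ, FS p ⊆ A

/-- A topological dynamical system `(X, T)` is minimal: every orbit is dense. -/
def MinimalTDS {X : Type*} [TopologicalSpace X] (T : X ≃ₜ X) : Prop :=
  ∀ x : X, Dense (Set.range fun n : ℤ => hIter T n x)

/-- `Nset T x U = N(x, U) = {n ∈ ℤ : Tⁿ x ∈ U}`. -/
def Nset {X : Type*} [TopologicalSpace X] (T : X ≃ₜ X) (x : X) (U : Set X) : Set ℤ :=
  { n : ℤ | hIter T n x ∈ U }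

/-- The regionally proximal relation of order `d`. -/
def RPd {X : Type*} [MetricSpace X] (T : X ≃ₜ X) (d : ℕ) (x y : X) : Prop :=
  ∀ δ : ℝ, 0 < δ → ∃ (x' y' : X) (n : Fin d → ℤ),
    dist x x' < δ ∧ dist y y' < δ ∧
    ∀ ε : Finset (Fin d), ε.Nonempty →
      dist (hIter T (∑ i ∈ ε, n i) x') (hIter T (∑ i ∈ ε, n i) y') < δ

/-- `S` is a set of `d`-topological recurrence. -/
def TopRecSet (d : ℕ) (S : Set ℤ) : Prop :=
  ∀ (X : Type) [MetricSpace X] [CompactSpace X] (T : X ≃ₜ X), MinimalTDS T →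
    ∀ U : Set X, IsOpen U → U.Nonempty →
      ∃ n ∈ S, (⋂ j ∈ Finset.range (d + 1), hIter T ((j : ℤ) * n) ⁻¹' U).Nonempty

/-- `S` is a set of `d`-recurrence (measurable recurrence). -/
def MeasRecSet (d : ℕ) (S : Set ℤ) : Prop :=
  ∀ (Y : Type) [MeasurableSpace Y] [StandardBorelSpace Y]
    (μ : Measure Y) [IsProbabilityMeasure μ] (T : Y ≃ᵐ Y),
    MeasurePreserving (⇑T) μ μ →
    ∀ A : Set Y, MeasurableSet A → 0 < μ A →
      ∃ n ∈ S, 0 < μ (⋂ j ∈ Finset.range (d + 1), zIter T.toEquiv ((j : ℤ) * n) ⁻¹' A)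

/-- `P` is a Birkhoff recurrence set of order `d`. -/
def BirkhoffRecSet (d : ℕ) (P : Set ℤ) : Prop :=
  ∀ (X : Type) [MetricSpace X] [CompactSpace X] (T : X ≃ₜ X), MinimalTDS T →
    ∀ U : Set X, IsOpen U → U.Nonempty →
      ∃ n : Fin d → ℤ, FS n ⊆ P ∧ (U ∩ ⋂ m ∈ FS n, hIter T m ⁻¹' U).Nonempty

/-- `F` is a Poincaré recurrence set of order `d`. -/
def PoincareRecSet (d : ℕ) (F : Set ℤ) : Prop :=
  ∀ (Y : Type) [MeasurableSpace Y] [StandardBorelSpace Y]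
    (μ : Measure Y) [IsProbabilityMeasure μ] (T : Y ≃ᵐ Y),
    MeasurePreserving (⇑T) μ μ →
    ∀ A : Set Y, MeasurableSet A → 0 < μ A →
      ∃ n : Fin d → ℤ, FS n ⊆ F ∧ 0 < μ (A ∩ ⋂ m ∈ FS n, zIter T.toEquiv m ⁻¹' A)

/-- The upper unitriangular matrix `M(a)` with entries `(M(a))_{i, i+k} = a i k`
(1-based indexing). -/
def Mmat (d : ℕ) (a : ℕ → ℕ → ℝ) : Matrix (Fin (d + 1)) (Fin (d + 1)) ℝ :=
  fun r c =>
    if (r : ℕ) = (c : ℕ) then 1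
    else if (r : ℕ) < (c : ℕ) then a ((r : ℕ) + 1) ((c : ℕ) - (r : ℕ)) else 0

/-- `P_ℓ(a; i, k) = ∑ a_i^{s₁} a_{i+s₁}^{s₂} ⋯`, sum over `(s₁,…,s_ℓ) ∈ {1,…,k}^ℓ`
with `s₁ + ⋯ + s_ℓ = k`. -/
def Ppoly (a : ℕ → ℕ → ℝ) (i k ℓ : ℕ) : ℝ :=
  ∑ s ∈ Finset.univ.filter (fun s : Fin ℓ → Fin k => (∑ t, ((s t : ℕ) + 1)) = k),
    ∏ t : Fin ℓ,
      a (i + ∑ u ∈ Finset.univ.filter (fun u : Fin ℓ => u < t), ((s u : ℕ) + 1))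
        ((s t : ℕ) + 1)

/-- The upper unitriangular matrix with superdiagonal `α₁, …, α_d` (1-based). -/
def Amat (d : ℕ) (α : ℕ → ℝ) : Matrix (Fin (d + 1)) (Fin (d + 1)) ℝ :=
  fun r c =>
    if (r : ℕ) = (c : ℕ) then 1
    else if (c : ℕ) = (r : ℕ) + 1 then α ((r : ℕ) + 1) else 0

end


section Aux8

variable {X : Type*} [TopologicalSpace X]

lemma hIter_zero (T : X ≃ₜ X) (x : X) : hIter T 0 x = x := by
  simp [hIter, zIter]

lemma hIter_add (T : X ≃ₜ X) (a b : ℤ) (x : X) :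
    hIter T (a + b) x = hIter T a (hIter T b x) := by
  simp [hIter, zIter, zpow_add, Equiv.Perm.mul_apply]

lemma hIter_one (T : X ≃ₜ X) (x : X) : hIter T 1 x = T x := by
  simp [hIter, zIter]

lemma hIter_neg_one (T : X ≃ₜ X) (x : X) : hIter T (-1) x = T.symm x := by
  simp only [hIter, zIter, zpow_neg, zpow_one]
  rfl

lemma hIter_conj {Y : Type*} [TopologicalSpace Y] (S : Y ≃ₜ Y) (T : X ≃ₜ X)
    (f : Y → X) (h : ∀ y, f (S y) = T (f y)) :
    ∀ (n : ℤ) (y : Y), f (hIter S n y) = hIter T n (f y) := by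
  have hsymm : ∀ y, f (S.symm y) = T.symm (f y) := by
    intro y
    have h2 := h (S.symm y)
    rw [S.apply_symm_apply] at h2
    rw [h2, T.symm_apply_apply]
  intro n
  induction n using Int.induction_on with
  | zero => intro y; simp [hIter_zero]
  | succ n ih =>
      intro y
      have e : ((n : ℤ) + 1) = 1 + (n : ℤ) := by ring
      rw [e, hIter_add, hIter_add, hIter_one, hIter_one, h, ih]
  | pred n ih =>
      intro y
      have e : (-(n : ℤ) - 1) = (-1) + (-(n : ℤ)) := by ring
      rw [e, hIter_add, hIter_add, hIter_neg_one, hIter_neg_one, hsymm, ih]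

lemma continuous_hIter (T : X ≃ₜ X) (n : ℤ) : Continuous (hIter T n) := by
  induction n using Int.induction_on with
  | zero =>
      have : hIter T (0 : ℤ) = id := funext fun x => hIter_zero T x
      rw [this]; exact continuous_id
  | succ n ih =>
      have : hIter T ((n : ℤ) + 1) = hIter T n ∘ T := by
        funext x
        rw [show ((n : ℤ) + 1) = (n : ℤ) + 1 from rfl, hIter_add, hIter_one]
        rfl
      rw [this]; exact ih.comp T.continuous
  | pred n ih =>
      have : hIter T (-(n : ℤ) - 1) = hIter T (-n) ∘ T.symm := by
        funext x
        rw [show (-(n : ℤ) - 1) = (-(n : ℤ)) + (-1) by ring, hIter_add, hIter_neg_one]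
        rfl
      rw [this]; exact ih.comp T.symm.continuous

end Aux8

lemma exists_minimal_invariant {X : Type} [MetricSpace X] [CompactSpace X] [Nonempty X]
    (T : X ≃ₜ X) :
    ∃ Y : Set X, Y.Nonempty ∧ IsClosed Y ∧ T '' Y = Y ∧
      ∀ A : Set X, A.Nonempty → IsClosed A → T '' A = A → A ⊆ Y → A = Y := by
  set S : Set (Set X) := {A | A.Nonempty ∧ IsClosed A ∧ T '' A = A} with hS
  have himg : ∀ A : Set X, T '' A = T.symm ⁻¹' A := by
    intro A
    ext z
    constructor
    · rintro ⟨w, hw, rfl⟩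
      simpa [T.symm_apply_apply] using hw
    · intro hz
      exact ⟨T.symm z, hz, T.apply_symm_apply z⟩
  have H : ∀ c ⊆ S, IsChain (· ⊆ ·) c → c.Nonempty → ∃ lb ∈ S, ∀ s ∈ c, lb ⊆ s := by
    intro c hcS hchain hcne
    refine ⟨⋂₀ c, ⟨?_, ?_, ?_⟩, fun s hs => Set.sInter_subset_of_mem hs⟩
    · haveI : Nonempty c := hcne.to_subtype
      apply IsCompact.nonempty_sInter_of_directed_nonempty_isCompact_isClosed
      · intro a ha b hb
        rcases eq_or_ne a b with rfl | hne
        · exact ⟨a, ha, subset_rfl, subset_rfl⟩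
        · rcases hchain ha hb hne with h | h
          · exact ⟨a, ha, subset_rfl, h⟩
          · exact ⟨b, hb, h, subset_rfl⟩
      · exact fun U hU => (hcS hU).1
      · exact fun U hU => (hcS hU).2.1.isCompact
      · exact fun U hU => (hcS hU).2.1
    · exact isClosed_sInter fun U hU => (hcS hU).2.1
    · rw [himg, Set.preimage_sInter]
      ext z
      simp only [Set.mem_iInter₂, Set.mem_sInter]
      constructor
      · intro hz A hA
        have := hz A hA
        rwa [← himg, (hcS hA).2.2] at this
      · intro hz A hA
        rw [← himg, (hcS hA).2.2]
        exact hz A hA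
  have huniv : Set.univ ∈ S := by
    refine ⟨Set.univ_nonempty, isClosed_univ, ?_⟩
    rw [Set.image_univ]
    exact T.surjective.range_eq
  obtain ⟨Y, _, hYmin⟩ := zorn_superset_nonempty S H Set.univ huniv
  exact ⟨Y, hYmin.prop.1, hYmin.prop.2.1, hYmin.prop.2.2,
    fun A h1 h2 h3 hsub => subset_antisymm hsub (hYmin.2 ⟨h1, h2, h3⟩ hsub)⟩

lemma exists_restrict_homeo {X : Type} [MetricSpace X] (T : X ≃ₜ X) (Y : Set X)
    (hY : T '' Y = Y) :
    ∃ S : {x // x ∈ Y} ≃ₜ {x // x ∈ Y}, ∀ y : {x // x ∈ Y}, (S y : X) = T (y : X) := by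
  have hmem : ∀ x ∈ Y, T x ∈ Y := fun x hx => hY ▸ Set.mem_image_of_mem T hx
  have hmem' : ∀ x ∈ Y, T.symm x ∈ Y := by
    intro x hx
    rw [← hY] at hx
    obtain ⟨z, hz, hzx⟩ := hx
    rw [← hzx, T.symm_apply_apply]
    exact hz
  refine ⟨{ toFun := fun y => ⟨T y, hmem y y.2⟩
            invFun := fun y => ⟨T.symm y, hmem' y y.2⟩
            left_inv := fun y => Subtype.ext (T.symm_apply_apply y)
            right_inv := fun y => Subtype.ext (T.apply_symm_apply y)
            continuous_toFun :=
              Continuous.subtype_mk (T.continuous.comp continuous_subtype_val) _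
            continuous_invFun :=
              Continuous.subtype_mk (T.symm.continuous.comp continuous_subtype_val) _ },
    fun y => rfl⟩


/-- Characterization of Birkhoff recurrence sets of order `d` via recurrence of
points in arbitrary topological dynamical systems. -/
theorem statement8 (d : ℕ) (hd : 1 ≤ d) (P : Set ℤ) :
    BirkhoffRecSet d P ↔
      ∀ (X : Type) [MetricSpace X] [CompactSpace X] [Nonempty X] (T : X ≃ₜ X),
        ∃ (x : X) (nn : ℕ → Fin d → ℤ), (∀ i, FS (nn i) ⊆ P) ∧
          ∀ ε : Finset (Fin d),
            Filter.Tendsto (fun i => hIter T (∑ j ∈ ε, nn i j) x)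
              Filter.atTop (nhds x) := by
  constructor
  · -- Forward direction
    intro hB X _ _ _ T
    obtain ⟨Y, hYne, hYcl, hYinv, hYmin⟩ := exists_minimal_invariant T
    obtain ⟨S, hS⟩ := exists_restrict_homeo T Y hYinv
    haveI : CompactSpace {x // x ∈ Y} := isCompact_iff_compactSpace.mp hYcl.isCompact
    haveI : Nonempty {x // x ∈ Y} := hYne.to_subtype
    have hconj : ∀ (n : ℤ) (y : {x // x ∈ Y}), ((hIter S n y : {x // x ∈ Y}) : X) = hIter T n (y : X) :=
      hIter_conj S T Subtype.val hS
    -- minimality of the subsystem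
    have hmin : MinimalTDS S := by
      intro y
      have hOY : closure (Set.range fun n : ℤ => hIter T n (y : X)) ⊆ Y := by
        apply closure_minimal _ hYcl
        rintro _ ⟨n, rfl⟩
        show hIter T n (y : X) ∈ Y
        rw [← hconj n y]
        exact (hIter S n y).2
      have hOne : (closure (Set.range fun n : ℤ => hIter T n (y : X))).Nonempty :=
        ⟨(y : X), subset_closure ⟨0, hIter_zero T y⟩⟩
      have hOinv : T '' closure (Set.range fun n : ℤ => hIter T n (y : X)) =
          closure (Set.range fun n : ℤ => hIter T n (y : X)) := by
        have himg : ⇑T '' (Set.range fun n : ℤ => hIter T n (y : X)) =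
            Set.range fun n : ℤ => hIter T n (y : X) := by
          ext z
          constructor
          · rintro ⟨_, ⟨n, rfl⟩, rfl⟩
            refine ⟨1 + n, ?_⟩
            show hIter T (1 + n) (y : X) = T (hIter T n (y : X))
            rw [hIter_add, hIter_one]
          · rintro ⟨n, rfl⟩
            refine ⟨hIter T (n - 1) (y : X), ⟨n - 1, rfl⟩, ?_⟩
            show T (hIter T (n - 1) (y : X)) = hIter T n (y : X)
            have h2 := hIter_add T 1 (n - 1) (y : X)
            rw [hIter_one] at h2
            rw [← h2]
            norm_num
        rw [Homeomorph.image_closure, himg]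
      have hOeq : closure (Set.range fun n : ℤ => hIter T n (y : X)) = Y :=
        hYmin _ hOne isClosed_closure hOinv hOY
      intro z
      rw [closure_subtype]
      have himg2 : Subtype.val '' (Set.range fun n : ℤ => hIter S n y) =
          Set.range fun n : ℤ => hIter T n (y : X) := by
        ext w
        constructor
        · rintro ⟨_, ⟨n, rfl⟩, rfl⟩
          exact ⟨n, (hconj n y).symm⟩
        · rintro ⟨n, rfl⟩
          exact ⟨hIter S n y, ⟨n, rfl⟩, hconj n y⟩
      rw [himg2, hOeq]
      exact z.2
    -- the sets of (1/(i+1))-recurrent points along P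
    set R : ℕ → Set {x // x ∈ Y} := fun i =>
      {z | ∃ n : Fin d → ℤ, FS n ⊆ P ∧
        ∀ I : Finset (Fin d), dist (hIter S (∑ j ∈ I, n j) z) z < 1 / ((i : ℝ) + 1)} with hR
    have hopen : ∀ i, IsOpen (R i) := by
      intro i
      have : R i = ⋃ n ∈ {n : Fin d → ℤ | FS n ⊆ P},
          ⋂ I : Finset (Fin d),
            (fun z => dist (hIter S (∑ j ∈ I, n j) z) z) ⁻¹' Set.Iio (1 / ((i : ℝ) + 1)) := by
        ext z
        simp only [hR, Set.mem_setOf_eq, Set.mem_iUnion, Set.mem_iInter, Set.mem_preimage,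
          Set.mem_Iio, exists_prop]
      rw [this]
      exact isOpen_biUnion fun n _ => isOpen_iInter_of_finite fun I =>
        isOpen_Iio.preimage (Continuous.dist (continuous_hIter S _) continuous_id)
    have hdense : ∀ i, Dense (R i) := by
      intro i
      rw [Metric.dense_iff]
      intro z r hr
      have hpos : (0 : ℝ) < 1 / ((i : ℝ) + 1) := by positivity
      set δ : ℝ := min (r / 2) (1 / ((i : ℝ) + 1) / 2) with hδ
      have hδpos : 0 < δ := lt_min (by linarith) (by positivity)
      obtain ⟨n, hnP, w, hw⟩ :=
        hB _ S hmin (Metric.ball z δ) Metric.isOpen_ball ⟨z, Metric.mem_ball_self hδpos⟩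
      have hwz : dist w z < δ := hw.1
      refine ⟨w, ?_, n, hnP, ?_⟩
      · exact Metric.mem_ball.mpr (lt_of_lt_of_le hwz ((min_le_left _ _).trans (by linarith)))
      · intro I
        rcases I.eq_empty_or_nonempty with rfl | hIne
        · simp only [Finset.sum_empty, hIter_zero, dist_self]
          exact hpos
        · have hmem : (∑ j ∈ I, n j) ∈ FS n := ⟨I, hIne, rfl⟩
          have hw2 : hIter S (∑ j ∈ I, n j) w ∈ Metric.ball z δ := by
            have := hw.2
            simp only [Set.mem_iInter] at this
            exact this _ hmem
          have h1 : dist (hIter S (∑ j ∈ I, n j) w) z < δ := Metric.mem_ball.mp hw2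
          have h2 : δ ≤ 1 / ((i : ℝ) + 1) / 2 := min_le_right _ _
          calc dist (hIter S (∑ j ∈ I, n j) w) w
              ≤ dist (hIter S (∑ j ∈ I, n j) w) z + dist z w := dist_triangle _ _ _
            _ < δ + δ := by rw [dist_comm z w]; exact add_lt_add h1 hwz
            _ ≤ 1 / ((i : ℝ) + 1) := by linarith
    obtain ⟨x0, hx0⟩ := (dense_iInter_of_isOpen hopen hdense).nonempty
    have hx0' : ∀ i : ℕ, x0 ∈ R i := Set.mem_iInter.mp hx0
    choose nn hnn1 hnn2 using hx0'
    refine ⟨(x0 : X), nn, hnn1, ?_⟩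
    intro ε
    rw [Metric.tendsto_atTop]
    intro δ hδ
    obtain ⟨N, hN⟩ := exists_nat_gt (1 / δ)
    refine ⟨N, fun i hi => ?_⟩
    have h1 : dist (hIter S (∑ j ∈ ε, nn i j) x0) x0 < 1 / ((i : ℝ) + 1) := hnn2 i ε
    have h2 : 1 / ((i : ℝ) + 1) < δ := by
      rw [div_lt_iff₀ (by positivity)]
      have : 1 / δ < (i : ℝ) + 1 := lt_of_lt_of_le hN (by exact_mod_cast Nat.le_succ_of_le hi)
      calc (1 : ℝ) = δ * (1 / δ) := by field_simp
        _ < δ * ((i : ℝ) + 1) := by exact (mul_lt_mul_iff_right₀ hδ).mpr this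
        _ = δ * ((i : ℝ) + 1) := rfl
    rw [← hconj]
    rw [show dist ((hIter S (∑ j ∈ ε, nn i j) x0 : {x // x ∈ Y}) : X) ((x0 : {x // x ∈ Y}) : X) =
      dist (hIter S (∑ j ∈ ε, nn i j) x0) x0 from rfl]
    linarith
  · -- Reverse direction
    intro h X _ _ T hmin U hU hUne
    haveI : Nonempty X := ⟨hUne.some⟩
    obtain ⟨x, nn, hP, htend⟩ := h X T
    obtain ⟨_, ⟨k, rfl⟩, hkU⟩ := (hmin x).exists_mem_open hU hUne
    have hopen : IsOpen (hIter T k ⁻¹' U) := hU.preimage (continuous_hIter T k)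
    obtain ⟨δ, hδpos, hball⟩ := Metric.isOpen_iff.mp hopen x hkU
    have hev : ∀ᶠ i in Filter.atTop,
        ∀ ε : Finset (Fin d), dist (hIter T (∑ j ∈ ε, nn i j) x) x < δ := by
      rw [Filter.eventually_all]
      intro ε
      obtain ⟨N, hN⟩ := Metric.tendsto_atTop.mp (htend ε) δ hδpos
      exact Filter.eventually_atTop.mpr ⟨N, hN⟩
    obtain ⟨i, hi⟩ := hev.exists
    refine ⟨nn i, hP i, hIter T k x, hkU, ?_⟩
    simp only [Set.mem_iInter]
    rintro m ⟨I, hIne, rfl⟩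
    show hIter T (∑ j ∈ I, nn i j) (hIter T k x) ∈ U
    have hcomm : hIter T (∑ j ∈ I, nn i j) (hIter T k x) =
        hIter T k (hIter T (∑ j ∈ I, nn i j) x) := by
      rw [← hIter_add, ← hIter_add, add_comm]
    rw [hcomm]
    exact hball (Metric.mem_ball.mpr (hi I))
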